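/- Let M ∈ ℝ^{n×n} be Hurwitz and D ∈ ℝ^{n×n} be symmetric positive definite, and let W be the (positive definite) solution of the Lyapunov equation MᵀW + WM + D = 0. Then W⁻¹ is the maximal positive semidefinite solution of the equation Y·Mᵀ + M·Y + Y·D·Y = 0: every symmetric positive semidefinite Ŷ ∈ ℝ^{n×n} satisfying Ŷ·Mᵀ + M·Ŷ + Ŷ·D·Ŷ = 0 satisfies Ŷ ⪯ W⁻¹. -/

import Mathlib

open Matrix MeasureTheory

/-- Spectral (ℓ² operator) norm of a real matrix. -/
noncomputable def specNorm {p q : Type*} [Fintype p] [Fintype q] [DecidableEq q]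
    (M : Matrix p q ℝ) : ℝ :=
  ‖LinearMap.toContinuousLinearMap (Matrix.toEuclideanLin M)‖

/-- A real square matrix is Hurwitz if all of its eigenvalues over ℂ have negative real part. -/
def IsHurwitz {k : Type*} [Fintype k] [DecidableEq k] (M : Matrix k k ℝ) : Prop :=
  ∀ μ ∈ spectrum ℂ (M.map (Complex.ofReal ·)), μ.re < 0

/-- Smallest (real) eigenvalue of a real matrix. -/
noncomputable def lamMin {k : Type*} [Fintype k] [DecidableEq k] (X : Matrix k k ℝ) : ℝ :=
  sInf (spectrum ℝ X)

/-- Largest (real) eigenvalue of a real matrix. -/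
noncomputable def lamMax {k : Type*} [Fintype k] [DecidableEq k] (X : Matrix k k ℝ) : ℝ :=
  sSup (spectrum ℝ X)

section AuxLyapunov
open NormedSpace Filter
open scoped MatrixOrder

variable {n : ℕ}

noncomputable def matCLM (A : Matrix (Fin n) (Fin n) ℝ) :
    EuclideanSpace ℝ (Fin n) →L[ℝ] EuclideanSpace ℝ (Fin n) :=
  LinearMap.toContinuousLinearMap (Matrix.toEuclideanLin A)

lemma matCLM_apply (A : Matrix (Fin n) (Fin n) ℝ) (a : EuclideanSpace ℝ (Fin n)) :
    matCLM A a = (WithLp.equiv 2 (Fin n → ℝ)).symm (A *ᵥ (WithLp.equiv 2 (Fin n → ℝ) a)) := rfl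

lemma inner_matCLM (A : Matrix (Fin n) (Fin n) ℝ) (a b : EuclideanSpace ℝ (Fin n)) :
    (inner ℝ a (matCLM A b) : ℝ)
      = (WithLp.equiv 2 (Fin n → ℝ) a) ⬝ᵥ (A *ᵥ (WithLp.equiv 2 (Fin n → ℝ) b)) := by
  rw [matCLM_apply, EuclideanSpace.inner_eq_star_dotProduct]
  simp [dotProduct_comm]

lemma matCLM_mul (A B : Matrix (Fin n) (Fin n) ℝ) (a : EuclideanSpace ℝ (Fin n)) :
    matCLM (A * B) a = matCLM A (matCLM B a) := by
  simp [matCLM_apply, Matrix.mulVec_mulVec]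

lemma psd_inner_nonneg {S : Matrix (Fin n) (Fin n) ℝ} (hS : S.PosSemidef)
    (a : EuclideanSpace ℝ (Fin n)) : 0 ≤ (inner ℝ a (matCLM S a) : ℝ) := by
  have := hS.dotProduct_mulVec_nonneg (WithLp.equiv 2 (Fin n → ℝ) a)
  rwa [star_trivial, ← inner_matCLM] at this


lemma dot_norm_sq (a : EuclideanSpace ℝ (Fin n)) :
    (WithLp.equiv 2 (Fin n → ℝ) a) ⬝ᵥ (WithLp.equiv 2 (Fin n → ℝ) a) = ‖a‖ ^ 2 := by
  rw [← real_inner_self_eq_norm_sq, EuclideanSpace.inner_eq_star_dotProduct]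
  simp

lemma quad_bound (A : Matrix (Fin n) (Fin n) ℝ) :
    ∃ C : ℝ, 0 ≤ C ∧ ∀ a : EuclideanSpace ℝ (Fin n),
      |(inner ℝ a (matCLM A a) : ℝ)| ≤ C * ‖a‖ ^ 2 := by
  refine ⟨‖matCLM A‖, norm_nonneg _, fun a => ?_⟩
  have h1 := abs_real_inner_le_norm a (matCLM A a)
  have h2 := (matCLM A).le_opNorm a
  have h3 := norm_nonneg a
  nlinarith

lemma inner_matCLM_symm {S : Matrix (Fin n) (Fin n) ℝ} (hS : Sᵀ = S)
    (a b : EuclideanSpace ℝ (Fin n)) :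
    (inner ℝ a (matCLM S b) : ℝ) = inner ℝ (matCLM S a) b := by
  rw [inner_matCLM, real_inner_comm, inner_matCLM]
  rw [Matrix.dotProduct_mulVec, ← Matrix.vecMul_transpose, hS, dotProduct_comm]

lemma posdef_coercive {S : Matrix (Fin n) (Fin n) ℝ} (hS : S.PosDef) :
    ∃ α : ℝ, 0 < α ∧ ∀ a : EuclideanSpace ℝ (Fin n),
      α * ‖a‖ ^ 2 ≤ (inner ℝ a (matCLM S a) : ℝ) := by
  set R := CFC.sqrt S with hRdef
  have hRR : R * R = S := CFC.sqrt_mul_sqrt_self S hS.posSemidef.nonneg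
  have hRh : R.PosSemidef := (CFC.sqrt_nonneg S).posSemidef
  have hRs : Rᵀ = R := by
    have h : Rᴴ = R := hRh.1
    rwa [Matrix.conjTranspose_eq_transpose_of_trivial] at h
  have hdet : IsUnit R.det := by
    have h1 : R.det * R.det = S.det := by rw [← Matrix.det_mul, hRR]
    have h2 : S.det ≠ 0 := ne_of_gt hS.det_pos
    have : R.det ≠ 0 := fun h => h2 (by rw [← h1, h, mul_zero])
    exact this.isUnit
  have hinv : R⁻¹ * R = 1 := Matrix.nonsing_inv_mul R hdet
  set K := ‖matCLM (R⁻¹ : Matrix (Fin n) (Fin n) ℝ)‖ with hK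
  refine ⟨(K ^ 2 + 1)⁻¹, by positivity, fun a => ?_⟩
  have hb : (inner ℝ a (matCLM S a) : ℝ) = ‖matCLM R a‖ ^ 2 := by
    rw [← hRR, matCLM_mul, inner_matCLM_symm hRs, real_inner_self_eq_norm_sq]
  have hcomp : matCLM (R⁻¹ : Matrix (Fin n) (Fin n) ℝ) (matCLM R a) = a := by
    rw [← matCLM_mul, hinv]
    simp [matCLM_apply, Matrix.one_mulVec]
  have h2 : ‖a‖ ≤ K * ‖matCLM R a‖ := by
    conv_lhs => rw [← hcomp]
    exact (matCLM (R⁻¹ : Matrix (Fin n) (Fin n) ℝ)).le_opNorm _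
  rw [inv_mul_le_iff₀ (by positivity)]
  have h3 : 0 ≤ K := norm_nonneg _
  have h4 : 0 ≤ ‖matCLM R a‖ := norm_nonneg _
  have h5 : 0 ≤ ‖a‖ := norm_nonneg _
  rw [hb]
  nlinarith

-- the derivative identity for quadratic forms along the flow
lemma inner_flow_identity (M S : Matrix (Fin n) (Fin n) ℝ) (a : EuclideanSpace ℝ (Fin n)) :
    (inner ℝ a (matCLM S (matCLM M a)) : ℝ) + (inner ℝ (matCLM M a) (matCLM S a) : ℝ)
      = inner ℝ a (matCLM (Mᵀ * S + S * M) a) := by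
  have key : ∀ w : Fin n → ℝ,
      w ⬝ᵥ (S *ᵥ (M *ᵥ w)) + (M *ᵥ w) ⬝ᵥ (S *ᵥ w) = w ⬝ᵥ ((Mᵀ * S + S * M) *ᵥ w) := by
    intro w
    have hl : w ⬝ᵥ ((Mᵀ * S) *ᵥ w) = (M *ᵥ w) ⬝ᵥ (S *ᵥ w) := by
      rw [← Matrix.mulVec_mulVec, Matrix.dotProduct_mulVec w Mᵀ, Matrix.vecMul_transpose]
    have hr : w ⬝ᵥ ((S * M) *ᵥ w) = w ⬝ᵥ (S *ᵥ (M *ᵥ w)) := by rw [← Matrix.mulVec_mulVec]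
    rw [Matrix.add_mulVec, dotProduct_add, hl, hr, add_comm]
  have h1 := key (WithLp.equiv 2 (Fin n → ℝ) a)
  rw [inner_matCLM, inner_matCLM, inner_matCLM]
  have e1 : (WithLp.equiv 2 (Fin n → ℝ)) (matCLM M a) = M *ᵥ (WithLp.equiv 2 (Fin n → ℝ) a) := by
    simp [matCLM_apply]
  rw [e1]
  exact h1

section withnorm
attribute [local instance] Matrix.linftyOpNormedRing Matrix.linftyOpNormedAlgebra

set_option maxHeartbeats 2000000 in
theorem lyapunov_psd (M W D P Q : Matrix (Fin n) (Fin n) ℝ)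
    (hWpd : W.PosDef) (hDpd : D.PosDef)
    (hW : Mᵀ * W + W * M + D = 0)
    (hPh : P.IsHermitian) (hQ : Q.PosSemidef)
    (hPQ : Mᵀ * P + P * M + Q = 0) : P.PosSemidef := by
  refine Matrix.PosSemidef.of_dotProduct_mulVec_nonneg hPh fun x => ?_
  rw [star_trivial]
  set a0 : EuclideanSpace ℝ (Fin n) := (WithLp.equiv 2 (Fin n → ℝ)).symm x with ha0
  suffices h : 0 ≤ (inner ℝ a0 (matCLM P a0) : ℝ) by
    rw [inner_matCLM] at h
    simpa [ha0] using h
  -- the trajectory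
  set Lx : Matrix (Fin n) (Fin n) ℝ →L[ℝ] EuclideanSpace ℝ (Fin n) :=
    LinearMap.toContinuousLinearMap
    { toFun := fun A => (WithLp.equiv 2 (Fin n → ℝ)).symm (A *ᵥ x)
      map_add' := fun A B => by simp [Matrix.add_mulVec]
      map_smul' := fun c A => by simp [Matrix.smul_mulVec] } with hLx
  set u : ℝ → EuclideanSpace ℝ (Fin n) := fun t => Lx (exp (t • M)) with hu
  have hLxapp : ∀ A, Lx A = (WithLp.equiv 2 (Fin n → ℝ)).symm (A *ᵥ x) := fun A => rfl
  have hu0 : u 0 = a0 := by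
    rw [hu]
    simp only [zero_smul, exp_zero, hLxapp, Matrix.one_mulVec, ha0]
  have huderiv : ∀ t, HasDerivAt u (matCLM M (u t)) t := by
    intro t
    have h := hasDerivAt_exp_smul_const' M t
    have h2 := Lx.hasFDerivAt.comp_hasDerivAt t h
    refine h2.congr_deriv ?_
    rw [matCLM_apply]
    simp only [hu, hLxapp, Equiv.apply_symm_apply, Matrix.mulVec_mulVec]
    exact hLxapp _
  -- derivative of quadratic forms along the flow
  have hquad : ∀ (S : Matrix (Fin n) (Fin n) ℝ) (t : ℝ),
      HasDerivAt (fun t => (inner ℝ (u t) (matCLM S (u t)) : ℝ))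
        ((inner ℝ (u t) (matCLM (Mᵀ * S + S * M) (u t)) : ℝ)) t := by
    intro S t
    have h1 := huderiv t
    have h2 : HasDerivAt (fun t => matCLM S (u t)) (matCLM S (matCLM M (u t))) t :=
      (matCLM S).hasFDerivAt.comp_hasDerivAt t h1
    have h3 := h1.inner ℝ h2
    rwa [inner_flow_identity M S (u t)] at h3
  -- the two scalar functions
  set g : ℝ → ℝ := fun t => (inner ℝ (u t) (matCLM W (u t)) : ℝ) with hgdef
  set f : ℝ → ℝ := fun t => (inner ℝ (u t) (matCLM P (u t)) : ℝ) with hfdef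
  have hMW : Mᵀ * W + W * M = -D := eq_neg_of_add_eq_zero_left hW
  have hMP : Mᵀ * P + P * M = -Q := eq_neg_of_add_eq_zero_left hPQ
  have hmatneg : ∀ (S : Matrix (Fin n) (Fin n) ℝ) (a : EuclideanSpace ℝ (Fin n)),
      matCLM (-S) a = -(matCLM S a) := by
    intro S a
    rw [matCLM_apply, matCLM_apply, Matrix.neg_mulVec]
    simp
  have hgderiv : ∀ t, HasDerivAt g (-(inner ℝ (u t) (matCLM D (u t)) : ℝ)) t := by
    intro t
    have h := hquad W t
    rw [hMW] at h
    rw [hmatneg, inner_neg_right] at h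
    exact h
  have hfderiv : ∀ t, HasDerivAt f (-(inner ℝ (u t) (matCLM Q (u t)) : ℝ)) t := by
    intro t
    have h := hquad P t
    rw [hMP] at h
    rw [hmatneg, inner_neg_right] at h
    exact h
  -- constants
  obtain ⟨αD, hαD, hαDle⟩ := posdef_coercive hDpd
  obtain ⟨αW, hαW, hαWle⟩ := posdef_coercive hWpd
  obtain ⟨CW, hCW, hCWle⟩ := quad_bound W
  obtain ⟨CP, hCP, hCPle⟩ := quad_bound P
  set c : ℝ := αD / (CW + 1) with hcdef
  have hcpos : 0 < c := by positivity
  have hcle : ∀ t, c * g t ≤ (inner ℝ (u t) (matCLM D (u t)) : ℝ) := by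
    intro t
    have h1 := hαDle (u t)
    have h2 := hCWle (u t)
    have h3 : g t ≤ CW * ‖u t‖ ^ 2 := (le_abs_self _).trans h2
    have h4 : 0 ≤ ‖u t‖ ^ 2 := sq_nonneg _
    rw [hcdef, div_mul_eq_mul_div, div_le_iff₀ (by positivity)]
    nlinarith [mul_le_mul_of_nonneg_left h3 hαD.le,
      mul_le_mul_of_nonneg_left h1 (by positivity : (0:ℝ) ≤ CW + 1)]
  -- exponential decay of g
  set G : ℝ → ℝ := fun t => g t * Real.exp (c * t) with hGdef
  have hGderiv : ∀ t, HasDerivAt G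
      ((-(inner ℝ (u t) (matCLM D (u t)) : ℝ)) * Real.exp (c * t)
        + g t * (Real.exp (c * t) * c)) t := by
    intro t
    have hexp : HasDerivAt (fun t : ℝ => Real.exp (c * t)) (Real.exp (c * t) * c) t := by
      have := ((hasDerivAt_id t).const_mul c).exp
      simpa using this
    exact (hgderiv t).mul hexp
  have hGanti : Antitone G := by
    apply antitone_of_deriv_nonpos
    · exact fun t => (hGderiv t).differentiableAt
    · intro t
      rw [(hGderiv t).deriv]
      have h1 := hcle t
      have h2 := Real.exp_pos (c * t)
      nlinarith [mul_le_mul_of_nonneg_right h1 h2.le]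
  have hgdecay : ∀ t : ℝ, 0 ≤ t → g t ≤ g 0 * Real.exp (-(c * t)) := by
    intro t ht
    have h1 : G t ≤ G 0 := hGanti ht
    have h2 : G 0 = g 0 := by simp [hGdef]
    have he : Real.exp (c * t) * Real.exp (-(c * t)) = 1 := by
      rw [← Real.exp_add]; simp
    calc g t = g t * (Real.exp (c * t) * Real.exp (-(c * t))) := by rw [he, mul_one]
      _ = G t * Real.exp (-(c * t)) := by rw [hGdef]; ring
      _ ≤ G 0 * Real.exp (-(c * t)) := mul_le_mul_of_nonneg_right h1 (Real.exp_nonneg _)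
      _ = g 0 * Real.exp (-(c * t)) := by rw [h2]
  have hfbound : ∀ t : ℝ, 0 ≤ t → |f t| ≤ (CP / αW) * (g 0 * Real.exp (-(c * t))) := by
    intro t ht
    have h1 := hCPle (u t)
    have h2 := hαWle (u t)
    have h3 := hgdecay t ht
    have h4 : 0 ≤ ‖u t‖ ^ 2 := sq_nonneg _
    rw [div_mul_eq_mul_div, le_div_iff₀ hαW]
    nlinarith [mul_le_mul_of_nonneg_right h1 hαW.le,
      mul_le_mul_of_nonneg_left (h2.trans h3) hCP]
  have hexp0 : Tendsto (fun t : ℝ => Real.exp (-(c * t))) atTop (nhds 0) := by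
    apply Real.tendsto_exp_atBot.comp
    have h1 : Tendsto (fun t : ℝ => c * t) atTop atTop :=
      Tendsto.const_mul_atTop hcpos tendsto_id
    exact tendsto_neg_atTop_atBot.comp h1
  have htends : Tendsto f atTop (nhds 0) := by
    apply squeeze_zero_norm' ?_ (by simpa using ((hexp0.const_mul (g 0)).const_mul (CP / αW)))
    filter_upwards [eventually_ge_atTop (0:ℝ)] with t ht
    simpa [Real.norm_eq_abs] using hfbound t ht
  have hfanti : Antitone f := by
    apply antitone_of_deriv_nonpos
    · exact fun t => (hfderiv t).differentiableAt
    · intro t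
      rw [(hfderiv t).deriv]
      simpa using psd_inner_nonneg hQ (u t)
  have hf0 : 0 ≤ f 0 :=
    le_of_tendsto htends (by
      filter_upwards [eventually_ge_atTop (0:ℝ)] with t ht
      exact hfanti ht)
  have : f 0 = (inner ℝ a0 (matCLM P a0) : ℝ) := by rw [hfdef]; simp [hu0]
  rwa [this] at hf0
end withnorm


end AuxLyapunov

/-- W⁻¹ is the maximal PSD solution of the Riccati-type equation. -/
theorem stmt_7 {n : ℕ} (M D : Matrix (Fin n) (Fin n) ℝ)
    (hM : IsHurwitz M) (hD : D.PosDef)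
    (W : Matrix (Fin n) (Fin n) ℝ) (hWpd : W.PosDef)
    (hW : Mᵀ * W + W * M + D = 0) :
    ∀ Yhat : Matrix (Fin n) (Fin n) ℝ, Yhat.PosSemidef →
      Yhat * Mᵀ + M * Yhat + Yhat * D * Yhat = 0 → (W⁻¹ - Yhat).PosSemidef := by
  intro Yhat hY hRic
  have hYs : Yhatᴴ = Yhat := hY.1
  have hYt : Yhatᵀ = Yhat := by
    have h := hYs
    rwa [Matrix.conjTranspose_eq_transpose_of_trivial] at h
  have hWt : Wᵀ = W := by
    have h : Wᴴ = W := hWpd.1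
    rwa [Matrix.conjTranspose_eq_transpose_of_trivial] at h
  have hdet : IsUnit W.det := hWpd.det_pos.ne'.isUnit
  have hWinv : W⁻¹ * W = 1 := Matrix.nonsing_inv_mul W hdet
  have hWinv' : W * W⁻¹ = 1 := Matrix.mul_nonsing_inv W hdet
  set P : Matrix (Fin n) (Fin n) ℝ := W - W * Yhat * W with hPdef
  set Q : Matrix (Fin n) (Fin n) ℝ := (1 - W * Yhat) * D * (1 - Yhat * W) with hQdef
  have hPQ : Mᵀ * P + P * M + Q = 0 := by
    have key : Mᵀ * P + P * M + Q
        = (Mᵀ * W + W * M + D) + W * (Yhat * Mᵀ + M * Yhat + Yhat * D * Yhat) * W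
          - (Mᵀ * W + W * M + D) * (Yhat * W) - (W * Yhat) * (Mᵀ * W + W * M + D) := by
      rw [hPdef, hQdef]; noncomm_ring
    rw [key, hW, hRic]
    simp
  have hPh : P.IsHermitian := by
    have h : Pᴴ = P := by
      rw [hPdef]
      simp [Matrix.conjTranspose_sub, Matrix.conjTranspose_mul, hYt, hWt,
        Matrix.mul_assoc]
    exact h
  have hQpsd : Q.PosSemidef := by
    have h1 : (1 - Yhat * W)ᴴ = 1 - W * Yhat := by
      simp [Matrix.conjTranspose_sub, Matrix.conjTranspose_mul, hYt, hWt]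
    have h2 := hD.posSemidef.conjTranspose_mul_mul_same (1 - Yhat * W)
    rwa [h1] at h2
  have hPpsd : P.PosSemidef := lyapunov_psd M W D P Q hWpd hD hW hPh hQpsd hPQ
  have hWis : (W⁻¹)ᴴ = W⁻¹ := by
    rw [Matrix.conjTranspose_nonsing_inv, hWpd.1.eq]
  have hDelta : W⁻¹ - Yhat = (W⁻¹)ᴴ * P * W⁻¹ := by
    rw [hWis, hPdef]
    have h3 : W⁻¹ * (W - W * Yhat * W) * W⁻¹
        = W⁻¹ * W * W⁻¹ - (W⁻¹ * W) * Yhat * (W * W⁻¹) := by noncomm_ring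
    rw [h3, hWinv, hWinv']
    simp
  have hfin := hPpsd.conjTranspose_mul_mul_same (W⁻¹)
  rwa [← hDelta] at hfin
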